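/- Let n ≥ 1, let 0 < ε < 1, let Q be an n×n row-stochastic matrix, let P = (ε/n)·J + (1−ε)·Q where J is the n×n all-ones matrix, and let π be a stationary distribution of P. Then for every probability row vector μ and every t ∈ ℕ, Σ_v |(μP^t)_v − π_v| ≤ (1−ε)^t · Σ_v |μ_v − π_v|; in particular μP^t converges to π in ℓ¹ at geometric rate (1−ε)^t. -/

import Mathlib

/-- Iterates of the PageRank transition matrix `P = (ε/n)·J + (1−ε)·Q` converge to the
stationary distribution `π` in ℓ¹ at geometric rate `(1−ε)^t`:
for every probability vector `μ` and every `t`,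
`‖μ Pᵗ − π‖₁ ≤ (1−ε)^t · ‖μ − π‖₁`. -/
theorem pagerank_power_iteration_geometric_convergence
    (n : ℕ) (hn : 1 ≤ n) (ε : ℝ) (hε0 : 0 < ε) (hε1 : ε < 1)
    (Q P : Matrix (Fin n) (Fin n) ℝ)
    (hQ0 : ∀ u v, 0 ≤ Q u v) (hQ1 : ∀ u, ∑ v, Q u v = 1)
    (hP : P = (ε / n) • (Matrix.of fun _ _ => (1 : ℝ)) + (1 - ε) • Q)
    (pr : Fin n → ℝ)
    (hpr0 : ∀ v, 0 ≤ pr v) (hpr1 : ∑ v, pr v = 1)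
    (hstat : ∀ v, ∑ u, pr u * P u v = pr v) :
    ∀ (μ : Fin n → ℝ), (∀ v, 0 ≤ μ v) → (∑ v, μ v = 1) →
      ∀ t : ℕ,
        ∑ v, |(∑ u, μ u * (P ^ t) u v) - pr v| ≤ (1 - ε) ^ t * ∑ v, |μ v - pr v| := by
  have hn0 : (n : ℝ) ≠ 0 := by positivity
  have hPsum : ∀ u, ∑ v, P u v = 1 := by
    intro u
    simp only [hP, Matrix.add_apply, Matrix.smul_apply, Matrix.of_apply, smul_eq_mul,
      Finset.sum_add_distrib, ← Finset.mul_sum, hQ1]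
    simp only [Finset.sum_const, Finset.card_fin, nsmul_eq_mul, mul_one]
    field_simp
    ring
  have key : ∀ x : Fin n → ℝ, (∑ u, x u) = 0 →
      ∑ v, |∑ u, x u * P u v| ≤ (1 - ε) * ∑ v, |x v| := by
    intro x hx
    have hform : ∀ v, ∑ u, x u * P u v = (1 - ε) * ∑ u, x u * Q u v := by
      intro v
      simp only [hP, Matrix.add_apply, Matrix.smul_apply, Matrix.of_apply, smul_eq_mul]
      rw [Finset.sum_congr rfl (fun u _ => by ring :
        ∀ u ∈ Finset.univ, x u * (ε / n * 1 + (1 - ε) * Q u v)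
          = (ε / n) * x u + (1 - ε) * (x u * Q u v))]
      rw [Finset.sum_add_distrib, ← Finset.mul_sum, ← Finset.mul_sum, hx]
      ring
    calc ∑ v, |∑ u, x u * P u v|
        = ∑ v, (1 - ε) * |∑ u, x u * Q u v| := by
          refine Finset.sum_congr rfl fun v _ => ?_
          rw [hform v, abs_mul, abs_of_nonneg (by linarith)]
      _ ≤ ∑ v, (1 - ε) * ∑ u, |x u| * Q u v := by
          refine Finset.sum_le_sum fun v _ => ?_
          refine mul_le_mul_of_nonneg_left ?_ (by linarith)
          calc |∑ u, x u * Q u v| ≤ ∑ u, |x u * Q u v| := Finset.abs_sum_le_sum_abs _ _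
            _ = ∑ u, |x u| * Q u v := by
                refine Finset.sum_congr rfl fun u _ => ?_
                rw [abs_mul, abs_of_nonneg (hQ0 u v)]
      _ = (1 - ε) * ∑ v, |x v| := by
          rw [← Finset.mul_sum, Finset.sum_comm]
          congr 1
          refine Finset.sum_congr rfl fun u _ => ?_
          rw [← Finset.mul_sum, hQ1, mul_one]
  intro μ hμ0 hμ1
  have hsum : ∀ t, ∑ v, (∑ u, μ u * (P ^ t) u v) = 1 := by
    intro t
    induction t with
    | zero => simp [Matrix.one_apply, hμ1]
    | succ t ih =>
      have hstep : ∀ v, ∑ u, μ u * (P ^ (t+1)) u v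
          = ∑ w, (∑ u, μ u * (P ^ t) u w) * P w v := by
        intro v
        rw [pow_succ]
        simp only [Matrix.mul_apply, Finset.mul_sum, Finset.sum_mul]
        rw [Finset.sum_comm]
        exact Finset.sum_congr rfl fun w _ => Finset.sum_congr rfl fun u _ => by ring
      calc ∑ v, (∑ u, μ u * (P ^ (t+1)) u v)
          = ∑ w, (∑ u, μ u * (P ^ t) u w) * ∑ v, P w v := by
            rw [Finset.sum_congr rfl fun v _ => hstep v, Finset.sum_comm]
            exact Finset.sum_congr rfl fun w _ => by rw [Finset.mul_sum]
        _ = 1 := by simp only [hPsum, mul_one, ih]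
  intro t
  induction t with
  | zero => simp [Matrix.one_apply]
  | succ t ih =>
    set x : Fin n → ℝ := fun u => (∑ w, μ w * (P ^ t) w u) - pr u with hxdef
    have hx0 : ∑ u, x u = 0 := by
      simp only [hxdef, Finset.sum_sub_distrib, hsum t, hpr1, sub_self]
    have hstep : ∀ v, (∑ u, μ u * (P ^ (t+1)) u v) - pr v = ∑ u, x u * P u v := by
      intro v
      have h1 : ∑ u, μ u * (P ^ (t+1)) u v = ∑ w, (∑ u, μ u * (P ^ t) u w) * P w v := by
        rw [pow_succ]
        simp only [Matrix.mul_apply, Finset.mul_sum, Finset.sum_mul]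
        rw [Finset.sum_comm]
        exact Finset.sum_congr rfl fun w _ => Finset.sum_congr rfl fun u _ => by ring
      rw [h1, ← hstat v, ← Finset.sum_sub_distrib]
      exact Finset.sum_congr rfl fun u _ => by simp [hxdef]; ring
    calc ∑ v, |(∑ u, μ u * (P ^ (t+1)) u v) - pr v|
        = ∑ v, |∑ u, x u * P u v| := by
          exact Finset.sum_congr rfl fun v _ => by rw [hstep v]
      _ ≤ (1 - ε) * ∑ v, |x v| := key x hx0
      _ ≤ (1 - ε) * ((1 - ε) ^ t * ∑ v, |μ v - pr v|) := by
          exact mul_le_mul_of_nonneg_left ih (by linarith)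
      _ = (1 - ε) ^ (t+1) * ∑ v, |μ v - pr v| := by ring
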